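/- arXiv:1103.4770 — 4 statements merged into one kernel-verified Lean document; each statement's English description precedes it below -/
import Mathlib

section
/- Let $G$ be an abelian group, $A \subseteq G$ a subset, and $k, \ell \geq 1$ natural numbers. Suppose $X_1, \dots, X_{k\ell+1}$ are subsets of $A$ such that each $X_i$ covers $A$ by $\ell$ translates and every $k$ of them (for distinct indices) have empty intersection. Then, in the abelian group $G' = G \times \mathbb{Z}/k\mathbb{Z}$, there exist pairwise disjoint subsets $Y_1, \dots, Y_{k\ell+1}$ of $A' = A \times \mathbb{Z}/k\mathbb{Z}$ such that each $Y_i$ covers $A'$ by $k\ell$ translates. (Concretely, one may take $(x, n) \in Y_i$ iff $x \in X_i$ and $n$ is the maximum number such that $x \in X_{i_1} \cap \dots \cap X_{i_n} \cap X_i$ for some distinct indices $i_1, \dots, i_n < i$.) -/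
/-- From `k*ℓ+1` subsets of `A` each covering `A` by `ℓ` translates, with every
`k` of them having empty intersection, one obtains in `G × ℤ/kℤ` pairwise disjoint subsets
`Y 1, …, Y (k*ℓ+1)` of `A × ℤ/kℤ`, each covering `A × ℤ/kℤ` by `k*ℓ` translates. -/
theorem stmt2 {G : Type*} [AddCommGroup G] (A : Set G) (k ℓ : ℕ)
    (hk : 1 ≤ k) (hℓ : 1 ≤ ℓ)
    (X : Fin (k * ℓ + 1) → Set G)
    (hXA : ∀ i, X i ⊆ A)
    (hcov : ∀ i, ∃ g : Fin ℓ → G, A ⊆ ⋃ j, (fun x => g j + x) '' X i)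
    (hint : ∀ s : Finset (Fin (k * ℓ + 1)), s.card = k → ⋂ i ∈ s, X i = ∅) :
    ∃ Y : Fin (k * ℓ + 1) → Set (G × ZMod k),
      (∀ i, Y i ⊆ A ×ˢ (Set.univ : Set (ZMod k))) ∧
      (Pairwise fun i j => Disjoint (Y i) (Y j)) ∧
      (∀ i, ∃ g : Fin (k * ℓ) → G × ZMod k,
        A ×ˢ (Set.univ : Set (ZMod k)) ⊆ ⋃ j, (fun x => g j + x) '' Y i) := by
  haveI : NeZero k := ⟨by omega⟩
  classical
  -- the count of previous sets containing x
  set c : G → Fin (k * ℓ + 1) → ℕ := fun x i =>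
    (Finset.univ.filter (fun j : Fin (k * ℓ + 1) => j < i ∧ x ∈ X j)).card with hc
  have hclt : ∀ x i, c x i < k := by
    intro x i
    by_contra h
    push_neg at h
    obtain ⟨t, ht, hcard⟩ := Finset.exists_subset_card_eq h
    have := hint t hcard
    have hx : x ∈ ⋂ j ∈ t, X j := by
      simp only [Set.mem_iInter]
      intro j hj
      have := ht hj
      simp only [Finset.mem_filter] at this
      exact this.2.2
    rw [this] at hx
    exact hx
  have hmono : ∀ x (i j : Fin (k * ℓ + 1)), i < j → x ∈ X i → c x i < c x j := by
    intro x i j hij hx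
    have hsub : insert i (Finset.univ.filter (fun m : Fin (k * ℓ + 1) => m < i ∧ x ∈ X m))
        ⊆ Finset.univ.filter (fun m : Fin (k * ℓ + 1) => m < j ∧ x ∈ X m) := by
      intro m hm
      simp only [Finset.mem_insert, Finset.mem_filter, Finset.mem_univ, true_and] at hm ⊢
      rcases hm with rfl | ⟨hmi, hmx⟩
      · exact ⟨hij, hx⟩
      · exact ⟨hmi.trans hij, hmx⟩
    have hnotin : i ∉ Finset.univ.filter (fun m : Fin (k * ℓ + 1) => m < i ∧ x ∈ X m) := by
      simp
    have hceq : c x i = (Finset.univ.filter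
        (fun m : Fin (k * ℓ + 1) => m < i ∧ x ∈ X m)).card := rfl
    calc c x i < (insert i (Finset.univ.filter
          (fun m : Fin (k * ℓ + 1) => m < i ∧ x ∈ X m))).card := by
          rw [Finset.card_insert_of_notMem hnotin]; omega
      _ ≤ c x j := Finset.card_le_card hsub
  refine ⟨fun i => {p : G × ZMod k | p.1 ∈ X i ∧ p.2 = (c p.1 i : ZMod k)}, ?_, ?_, ?_⟩
  · intro i p hp
    exact ⟨hXA i hp.1, Set.mem_univ _⟩
  · -- pairwise disjoint
    have key : ∀ (i j : Fin (k * ℓ + 1)), i < j →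
        Disjoint {p : G × ZMod k | p.1 ∈ X i ∧ p.2 = (c p.1 i : ZMod k)}
          {p : G × ZMod k | p.1 ∈ X j ∧ p.2 = (c p.1 j : ZMod k)} := by
      intro i j hij
      rw [Set.disjoint_left]
      rintro ⟨x, n⟩ ⟨hxi, hn⟩ ⟨hxj, hn'⟩
      have heq : ((c x i : ℕ) : ZMod k) = ((c x j : ℕ) : ZMod k) := by
        rw [← hn, ← hn']
      have := hmono x i j hij hxi
      have h1 := ZMod.val_cast_of_lt (hclt x i)
      have h2 := ZMod.val_cast_of_lt (hclt x j)
      rw [heq] at h1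
      omega
    intro i j hij
    rcases lt_or_gt_of_ne hij with h | h
    · exact key i j h
    · exact (key j i h).symm
  · -- covering
    intro i
    obtain ⟨g0, hg0⟩ := hcov i
    refine ⟨fun j => (g0 (finProdFinEquiv.symm j).2,
      (((finProdFinEquiv.symm j).1 : Fin k) : ZMod k)), ?_⟩
    rintro ⟨a, t⟩ ⟨ha, -⟩
    obtain ⟨j₁, x, hx, hax⟩ := Set.mem_iUnion.mp (hg0 ha)
    simp only at hax
    set n : ZMod k := (c x i : ZMod k) with hn
    set m : Fin k := ⟨(t - n).val, ZMod.val_lt _⟩ with hm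
    refine Set.mem_iUnion.mpr ⟨finProdFinEquiv (m, j₁), ⟨(x, n), ⟨hx, rfl⟩, ?_⟩⟩
    simp only [Equiv.symm_apply_apply]
    have hcast : ((m : Fin k) : ZMod k) = t - n := by
      simp only [hm]
      exact_mod_cast ZMod.natCast_rightInverse (t - n)
    rw [Prod.ext_iff]
    constructor
    · simpa using hax
    · simp [hcast]
end

section
/- Let $K$ be a compact Hausdorff abelian topological group, $k \geq 0$, and let $\Gamma$ be a torsion-free subgroup of the topological group $\mathbb{R}^k \times K$ that is discrete in the subspace topology. Then the projection homomorphism $p : \mathbb{R}^k \times K \to \mathbb{R}^k$ restricted to $\Gamma$ is injective, and the image $p(\Gamma)$ is a discrete subgroup of $\mathbb{R}^k$. -/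
/-- For a compact Hausdorff abelian topological group `K` and a torsion-free
discrete subgroup `Γ` of `ℝ^k × K`, the projection to `ℝ^k` is injective on `Γ` and its
image is a discrete subgroup of `ℝ^k`. -/
theorem stmt6 {K : Type*} [AddCommGroup K] [TopologicalSpace K]
    [IsTopologicalAddGroup K] [CompactSpace K] [T2Space K]
    (k : ℕ) (Γ : AddSubgroup ((Fin k → ℝ) × K))
    (htf : ∀ x ∈ Γ, ∀ n : ℕ, 0 < n → n • x = 0 → x = 0)
    (hdisc : DiscreteTopology Γ) :
    Set.InjOn Prod.fst (Γ : Set ((Fin k → ℝ) × K)) ∧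
      DiscreteTopology (Γ.map (AddMonoidHom.fst (Fin k → ℝ) K)) := by
  haveI := hdisc
  have hΓclosed : IsClosed (Γ : Set ((Fin k → ℝ) × K)) :=
    AddSubgroup.isClosed_of_discrete
  -- the set of elements of Γ with zero first coordinate is finite
  set S : Set ((Fin k → ℝ) × K) := (Γ : Set _) ∩ ({0} ×ˢ Set.univ) with hS
  have hScompact : IsCompact S := by
    have h1 : IsCompact (({0} : Set (Fin k → ℝ)) ×ˢ (Set.univ : Set K)) :=
      isCompact_singleton.prod isCompact_univ
    exact h1.of_isClosed_subset (hΓclosed.inter (isClosed_singleton.prod isClosed_univ))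
      Set.inter_subset_right
  have hSdisc : DiscreteTopology S :=
    DiscreteTopology.of_subset hdisc Set.inter_subset_left
  have hSfin : S.Finite := hScompact.finite (isDiscrete_iff_discreteTopology.mpr hSdisc)
  -- any element of Γ with zero first coordinate is zero
  have hker : ∀ x ∈ Γ, x.1 = 0 → x = 0 := by
    intro x hx hx1
    by_contra hx0
    have hmem : ∀ n : ℕ, n • x ∈ S := by
      intro n
      refine ⟨Γ.nsmul_mem hx n, ?_, Set.mem_univ _⟩
      show n • x.1 = 0
      simp [hx1]
    have hinj : Function.Injective (fun n : ℕ => n • x) := by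
      intro m n hmn
      by_contra hne
      wlog hlt : m < n generalizing m n
      · exact this hmn.symm (Ne.symm hne) (by omega)
      · have : (n - m) • x = 0 := by
          have h0 : n • x - m • x = 0 := by simp [hmn]
          have h1 : n • x = (n - m) • x + m • x := by
            rw [← add_nsmul, Nat.sub_add_cancel hlt.le]
          rw [h1] at h0
          rw [add_sub_cancel_right] at h0
          exact h0
        exact hx0 (htf x hx (n - m) (by omega) this)
    exact Set.infinite_of_injective_forall_mem hinj hmem hSfin
  have hinjOn : Set.InjOn Prod.fst (Γ : Set ((Fin k → ℝ) × K)) := by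
    intro a ha b hb hab
    have hsub : a - b ∈ Γ := Γ.sub_mem ha hb
    have h1 : (a - b).1 = 0 := by simp [Prod.fst_sub, hab]
    have := hker _ hsub h1
    exact sub_eq_zero.mp this
  refine ⟨hinjOn, ?_⟩
  -- the restricted projection is a closed embedding
  set f : Γ → (Fin k → ℝ) := fun x => (x : (Fin k → ℝ) × K).1 with hf
  have hfc : Continuous f := continuous_fst.comp continuous_subtype_val
  have hfi : Function.Injective f := by
    intro a b hab
    exact Subtype.ext (hinjOn a.2 b.2 hab)
  have hfcl : IsClosedMap f := by
    intro C hC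
    have h1 : IsClosed (Subtype.val '' C : Set ((Fin k → ℝ) × K)) :=
      hΓclosed.isClosedEmbedding_subtypeVal.isClosedMap _ hC
    have h2 : f '' C = Prod.fst '' (Subtype.val '' C) := by
      rw [Set.image_image]
    rw [h2]
    exact isClosedMap_fst_of_compactSpace _ h1
  have hemb : Topology.IsClosedEmbedding f :=
    Topology.IsClosedEmbedding.of_continuous_injective_isClosedMap hfc hfi hfcl
  have hrange : DiscreteTopology (Set.range f) := by
    have h := (Topology.IsEmbedding.toHomeomorph (f := f) hemb.toIsEmbedding).symm.isEmbedding
    exact h.discreteTopology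
  have hsets : ((Γ.map (AddMonoidHom.fst (Fin k → ℝ) K)) : Set (Fin k → ℝ)) = Set.range f := by
    ext y
    simp only [AddSubgroup.coe_map, AddMonoidHom.coe_fst, Set.mem_image, Set.mem_range]
    constructor
    · rintro ⟨x, hx, rfl⟩; exact ⟨⟨x, hx⟩, rfl⟩
    · rintro ⟨⟨x, hx⟩, rfl⟩; exact ⟨x, hx, rfl⟩
  have : DiscreteTopology ((Γ.map (AddMonoidHom.fst (Fin k → ℝ) K) : Set (Fin k → ℝ))) :=
    hsets ▸ hrange
  exact this
end

section
/- Let $K$ be a compact Hausdorff abelian topological group, $k, r \geq 0$, and let $\mathbb{T} = \mathbb{R}/\mathbb{Z}$ denote the circle group. Suppose there exists a continuous, open, surjective group homomorphism $\varphi : \mathbb{R}^k \times K \to \mathbb{T}^{k+r}$ whose kernel is exactly $\mathbb{Z}^k \times \{0\}$ (the standard integer lattice in the $\mathbb{R}^k$ factor). Then $K$ is isomorphic as a topological group to $\mathbb{T}^r$. -/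
open Matrix

noncomputable section


open Set



local instance : Fact ((0:ℝ) < 1) := ⟨one_pos⟩

def sect : AddCircle (1:ℝ) → ℝ := fun z => ((AddCircle.equivIco 1 (-(1/2)) z : Ico _ _) : ℝ)

lemma sect_coe {x : ℝ} (hx : x ∈ Ico (-(1/2) : ℝ) (1/2)) : sect (↑x) = x := by
  have hx' : x ∈ Ico (-(1/2) : ℝ) (-(1/2) + 1) := by
    rwa [show (-(1/2) : ℝ) + 1 = 1/2 by norm_num]
  have : (AddCircle.equivIco 1 (-(1/2)) (↑x)) = ⟨x, hx'⟩ := by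
    rw [Equiv.apply_eq_iff_eq_symm_apply]; rfl
  simp [sect, this]

lemma coe_sect (z : AddCircle (1:ℝ)) : ((sect z : ℝ) : AddCircle (1:ℝ)) = z := by
  conv_rhs => rw [← (AddCircle.equivIco (1:ℝ) (-(1/2))).symm_apply_apply z]
  rfl

lemma sect_mem (z : AddCircle (1:ℝ)) :
    sect z ∈ Ico (-(1/2) : ℝ) (1/2) := by
  have h := (AddCircle.equivIco (1:ℝ) (-(1/2)) z).2
  have : sect z ∈ Ico (-(1/2):ℝ) (-(1/2)+1) := h
  rwa [show (-(1/2) : ℝ) + 1 = 1/2 by norm_num] at this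

lemma continuousAt_sect {z : AddCircle (1:ℝ)} (hz : z ≠ ((-(1/2) : ℝ) : AddCircle (1:ℝ))) :
    ContinuousAt sect z :=
  continuousAt_subtype_val.comp (AddCircle.continuousAt_equivIco 1 (-(1/2)) hz)

lemma coe_eq_coe_iff {x y : ℝ} (hx : x ∈ Ico (-(1/2) : ℝ) (1/2))
    (hy : y ∈ Ico (-(1/2) : ℝ) (1/2)) :
    ((x : AddCircle (1:ℝ)) = (y : AddCircle (1:ℝ))) ↔ x = y := by
  have hx' : x ∈ Ico (-(1/2) : ℝ) (-(1/2) + 1) := by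
    rwa [show (-(1/2) : ℝ) + 1 = 1/2 by norm_num]
  have hy' : y ∈ Ico (-(1/2) : ℝ) (-(1/2) + 1) := by
    rwa [show (-(1/2) : ℝ) + 1 = 1/2 by norm_num]
  exact AddCircle.coe_eq_coe_iff_of_mem_Ico hx' hy'

/-- Classification of continuous characters `ℝ → 𝕋`. -/
lemma char_real (χ : ℝ →+ AddCircle (1:ℝ)) (hχ : Continuous χ) :
    ∃ a : ℝ, ∀ t : ℝ, χ t = ((a * t : ℝ) : AddCircle (1:ℝ)) := by
  -- the set of points mapped into the small ball
  obtain ⟨δ, δpos, hδ⟩ : ∃ δ > 0, ∀ t : ℝ, |t| < δ →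
      χ t ∈ (fun x : ℝ => (x : AddCircle (1:ℝ))) '' Ioo (-(1/4)) (1/4) := by
    have hopen : IsOpen ((fun x : ℝ => (x : AddCircle (1:ℝ))) '' Ioo (-(1/4)) (1/4)) :=
      QuotientAddGroup.isOpenMap_coe _ isOpen_Ioo
    have h0 : (0 : AddCircle (1:ℝ)) ∈ (fun x : ℝ => (x : AddCircle (1:ℝ))) '' Ioo (-(1/4)) (1/4) :=
      ⟨0, by norm_num, rfl⟩
    have : χ ⁻¹' _ ∈ nhds (0:ℝ) := (hopen.preimage hχ).mem_nhds
      (by rw [Set.mem_preimage, map_zero]; exact h0)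
    obtain ⟨δ, δpos, hball⟩ := Metric.mem_nhds_iff.mp this
    exact ⟨δ, δpos, fun t ht => hball (by simpa [Real.dist_eq] using ht)⟩
  set ℓ : ℝ → ℝ := fun t => sect (χ t) with hℓ
  have hℓπ : ∀ t, ((ℓ t : ℝ) : AddCircle (1:ℝ)) = χ t := fun t => coe_sect _
  have hℓmem : ∀ t, |t| < δ → ℓ t ∈ Ioo (-(1/4) : ℝ) (1/4) := by
    intro t ht
    obtain ⟨u, hu, huy⟩ := hδ t ht
    have : ℓ t = u := by
      rw [hℓ]; simp only [← huy]
      exact sect_coe ⟨by linarith [hu.1], by linarith [hu.2]⟩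
    rw [this]; exact hu
  have hzero : ℓ 0 = 0 := by
    have : χ 0 = ((0:ℝ) : AddCircle (1:ℝ)) := by simp
    rw [hℓ]; simp only [this]
    exact sect_coe ⟨by norm_num, by norm_num⟩
  have hadd : ∀ x y : ℝ, |x| < δ/2 → |y| < δ/2 → ℓ (x + y) = ℓ x + ℓ y := by
    intro x y hx hy
    have hx' : |x| < δ := by linarith [abs_nonneg y]
    have hy' : |y| < δ := by linarith [abs_nonneg x]
    have hxy : |x + y| < δ := lt_of_le_of_lt (abs_add_le x y) (by linarith)
    have m1 := hℓmem x hx'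
    have m2 := hℓmem y hy'
    have m3 := hℓmem (x + y) hxy
    have hcoe : ((ℓ (x+y) : ℝ) : AddCircle (1:ℝ)) = ((ℓ x + ℓ y : ℝ) : AddCircle (1:ℝ)) := by
      rw [AddCircle.coe_add, hℓπ, hℓπ, hℓπ, map_add]
    exact (coe_eq_coe_iff ⟨by linarith [m3.1], by linarith [m3.2]⟩
      ⟨by linarith [m1.1, m2.1], by linarith [m1.2, m2.2]⟩).mp hcoe
  have hnat : ∀ (x : ℝ) (m : ℕ), |x| < δ/2 → |(m : ℝ) * x| < δ/2 → ℓ ((m : ℝ) * x) = m * ℓ x := by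
    intro x m
    induction m with
    | zero => intro _ _; simpa using hzero
    | succ m ih =>
      intro hx hmx
      have hmx' : |(m : ℝ) * x| < δ/2 := by
        have : |(m:ℝ) * x| ≤ |((m:ℕ)+1 : ℝ) * x| := by
          rw [abs_mul, abs_mul]
          have : |(m:ℝ)| ≤ |((m:ℕ)+1 : ℝ)| := by
            rw [abs_of_nonneg (by positivity), abs_of_nonneg (by positivity)]
            linarith
          exact mul_le_mul_of_nonneg_right this (abs_nonneg x)
        calc |(m:ℝ) * x| ≤ |((m:ℕ)+1 : ℝ) * x| := this
        _ < δ/2 := by push_cast at hmx ⊢; exact hmx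
      have heq : ((m+1 : ℕ) : ℝ) * x = (m:ℝ) * x + x := by push_cast; ring
      rw [heq, hadd _ _ hmx' hx, ih hx hmx']
      push_cast; ring
  -- scaled value independent of denominator
  have hindep : ∀ (t : ℝ) (a b : ℕ), a ≠ 0 → b ≠ 0 → |t / a| < δ/2 → |t / b| < δ/2 →
      (a : ℝ) * ℓ (t / a) = (b : ℝ) * ℓ (t / b) := by
    have key : ∀ (t : ℝ) (a b : ℕ), a ≠ 0 → b ≠ 0 → |t / a| < δ/2 →
        (a : ℝ) * ℓ (t / a) = ((a*b : ℕ) : ℝ) * ℓ (t / (a*b : ℕ)) := by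
      intro t a b ha hb hta
      have hb1 : (1:ℝ) ≤ b := by exact_mod_cast Nat.one_le_iff_ne_zero.mpr hb
      have ha0 : (0:ℝ) < a := by exact_mod_cast Nat.pos_of_ne_zero ha
      have hab : ((a*b : ℕ) : ℝ) = (a:ℝ) * b := by push_cast; ring
      have habpos : (0:ℝ) < (a:ℝ) * b := by positivity
      have hsmall : |t / ((a:ℝ)*b)| < δ/2 := by
        have : |t / ((a:ℝ)*b)| = |t / a| / b := by
          rw [div_mul_eq_div_div, abs_div, abs_of_nonneg (by linarith : (0:ℝ) ≤ (b:ℝ))]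
        rw [this]
        calc |t/a| / b ≤ |t/a| := by
              apply div_le_self (abs_nonneg _) hb1
        _ < δ/2 := hta
      have heq : (b:ℝ) * (t / ((a:ℝ)*b)) = t / a := by field_simp
      have this2 := hnat (t / ((a:ℝ)*b)) b hsmall (by rw [heq]; exact hta)
      rw [heq] at this2
      rw [hab, this2]
      push_cast
      ring
    intro t a b ha hb hta htb
    have h1 := key t a b ha hb hta
    have h2 := key t b a hb ha htb
    rw [Nat.mul_comm b a] at h2
    rw [h1, h2]
  -- the global rescaled lift
  set N : ℝ → ℕ := fun t => ⌈|t| / (δ/4)⌉₊ + 1 with hN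
  have hNpos : ∀ t, N t ≠ 0 := fun t => Nat.succ_ne_zero _
  have hNposR : ∀ t, (0:ℝ) < (N t : ℝ) := fun t => by
    exact_mod_cast Nat.pos_of_ne_zero (hNpos t)
  have hNbound : ∀ t, |t / (N t : ℝ)| < δ/2 := by
    intro t
    have h1 : |t| / (δ/4) ≤ (⌈|t| / (δ/4)⌉₊ : ℝ) := Nat.le_ceil _
    have h2 : ((⌈|t| / (δ/4)⌉₊ : ℕ) : ℝ) < (N t : ℝ) := by
      rw [hN]; push_cast; linarith
    have h3 : |t| < (N t : ℝ) * (δ/4) := by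
      have : |t| ≤ (⌈|t| / (δ/4)⌉₊ : ℝ) * (δ/4) := by
        rw [← div_le_iff₀ (by linarith : (0:ℝ) < δ/4)]
        exact h1
      calc |t| ≤ (⌈|t| / (δ/4)⌉₊ : ℝ) * (δ/4) := this
      _ < (N t : ℝ) * (δ/4) := by
        apply mul_lt_mul_of_pos_right h2 (by linarith)
    rw [abs_div, abs_of_pos (hNposR t), div_lt_iff₀ (hNposR t)]
    calc |t| < (N t : ℝ) * (δ/4) := h3
    _ ≤ δ/2 * (N t : ℝ) := by
      rw [mul_comm]
      apply mul_le_mul_of_nonneg_right (by linarith) (le_of_lt (hNposR t))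
  set L : ℝ → ℝ := fun t => (N t : ℝ) * ℓ (t / (N t : ℝ)) with hL
  have hLeq : ∀ (t : ℝ) (n : ℕ), n ≠ 0 → |t/(n:ℝ)| < δ/2 → L t = (n:ℝ) * ℓ (t/(n:ℝ)) :=
    fun t n hn h => hindep t (N t) n (hNpos t) hn (hNbound t) h
  have hLloc : ∀ t, |t| < δ/2 → L t = ℓ t := by
    intro t ht
    have := hLeq t 1 one_ne_zero (by simpa using ht)
    simpa using this
  have hLadd : ∀ x y, L (x + y) = L x + L y := by
    intro x y
    set n : ℕ := N x * N y * N (x+y) with hn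
    have hn0 : n ≠ 0 := by
      simp [hn, Nat.mul_eq_zero, hNpos x, hNpos y, hNpos (x+y)]
    have hnR : (0:ℝ) < (n:ℝ) := by exact_mod_cast Nat.pos_of_ne_zero hn0
    have hmono : ∀ (s : ℝ) (m : ℕ), m ≠ 0 → (m:ℝ) ≤ (n:ℝ) → |s/(m:ℝ)| < δ/2 → |s/(n:ℝ)| < δ/2 := by
      intro s m hm hmn h
      have hmR : (0:ℝ) < (m:ℝ) := by exact_mod_cast Nat.pos_of_ne_zero hm
      have : |s/(n:ℝ)| ≤ |s/(m:ℝ)| := by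
        rw [abs_div, abs_div, abs_of_pos hmR, abs_of_pos hnR]
        apply div_le_div_of_nonneg_left (abs_nonneg s) hmR hmn
      linarith
    have hle : ∀ m : ℕ, m ≠ 0 → m ∣ n → (m:ℝ) ≤ (n:ℝ) := by
      intro m hm hdvd
      exact_mod_cast Nat.le_of_dvd (Nat.pos_of_ne_zero hn0) hdvd
    have hx : |x/(n:ℝ)| < δ/2 :=
      hmono x (N x) (hNpos x) (hle _ (hNpos x) ⟨N y * N (x+y), by rw [hn]; ring⟩) (hNbound x)
    have hy : |y/(n:ℝ)| < δ/2 :=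
      hmono y (N y) (hNpos y) (hle _ (hNpos y) ⟨N x * N (x+y), by rw [hn]; ring⟩) (hNbound y)
    have hxy : |(x+y)/(n:ℝ)| < δ/2 :=
      hmono (x+y) (N (x+y)) (hNpos (x+y)) (hle _ (hNpos (x+y)) ⟨N x * N y, by rw [hn]; ring⟩)
        (hNbound (x+y))
    rw [hLeq (x+y) n hn0 hxy, hLeq x n hn0 hx, hLeq y n hn0 hy, add_div,
      hadd _ _ hx hy]
    ring
  have hLπ : ∀ t, ((L t : ℝ) : AddCircle (1:ℝ)) = χ t := by
    intro t
    have h1 : L t = (N t) • ℓ (t / (N t : ℝ)) := by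
      rw [hL, nsmul_eq_mul]
    rw [h1, AddCircle.coe_nsmul, hℓπ, ← map_nsmul, nsmul_eq_mul,
      mul_div_cancel₀ _ (ne_of_gt (hNposR t))]
  -- continuity and linearity
  have hzne : (0 : AddCircle (1:ℝ)) ≠ ((-(1/2) : ℝ) : AddCircle (1:ℝ)) := by
    have h0 : ((0:ℝ) : AddCircle (1:ℝ)) = (0 : AddCircle (1:ℝ)) := by norm_num
    rw [← h0]
    rw [Ne, coe_eq_coe_iff (by norm_num) (by norm_num)]
    norm_num
  have hℓcont0 : ContinuousAt ℓ 0 := by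
    have hχ0 : χ 0 = 0 := map_zero χ
    have : ContinuousAt sect (χ 0) := by
      rw [hχ0]; exact continuousAt_sect (by simpa using hzne)
    exact this.comp hχ.continuousAt
  have hLcont0 : ContinuousAt L 0 := by
    apply ContinuousAt.congr hℓcont0
    have hball : Metric.ball (0:ℝ) (δ/2) ∈ nhds (0:ℝ) := Metric.ball_mem_nhds _ (by linarith)
    apply Filter.eventuallyEq_of_mem hball
    intro t ht
    exact (hLloc t (by simpa [Real.dist_eq] using ht)).symm
  set Lhom : ℝ →+ ℝ := AddMonoidHom.mk' L hLadd with hLhom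
  have hLhomcoe : ⇑Lhom = L := rfl
  have hLcont : Continuous Lhom := by
    apply continuous_of_continuousAt_zero Lhom
    rw [hLhomcoe]; exact hLcont0
  refine ⟨L 1, fun t => ?_⟩
  have hlin := map_real_smul Lhom hLcont t 1
  rw [hLhomcoe] at hlin
  simp only [smul_eq_mul, mul_one] at hlin
  rw [← hLπ t, hlin, mul_comm]





lemma matrix_eq_of_mulVec {s t : ℕ} (A B : Matrix (Fin s) (Fin t) ℤ)
    (h : ∀ w : Fin t → ℤ, A *ᵥ w = B *ᵥ w) : A = B := by
  ext i j
  have := congrFun (h (Pi.single j 1)) i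
  rw [Matrix.mulVec_single, Matrix.mulVec_single] at this
  simpa using this

lemma exists_complement (k r : ℕ) (n : Matrix (Fin (k+r)) (Fin k) ℤ)
    (hinj : ∀ z : Fin k → ℤ, n *ᵥ z = 0 → z = 0)
    (hsat : ∀ (c : ℤ) (y : Fin (k+r) → ℤ), c ≠ 0 →
      (∃ z, n *ᵥ z = c • y) → ∃ w, n *ᵥ w = y) :
    ∃ (C1 : Matrix (Fin k) (Fin (k+r)) ℤ) (C2 : Matrix (Fin r) (Fin (k+r)) ℤ)
      (D : Matrix (Fin (k+r)) (Fin r) ℤ),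
      C2 * n = 0 ∧ C2 * D = 1 ∧ n * C1 + D * C2 = 1 := by
  classical
  set F : (Fin k → ℤ) →ₗ[ℤ] (Fin (k+r) → ℤ) := Matrix.mulVecLin n with hF
  set M : Submodule ℤ (Fin (k+r) → ℤ) := LinearMap.range F with hM
  set Q := (Fin (k+r) → ℤ) ⧸ M with hQ
  haveI : NoZeroSMulDivisors ℤ Q := by
    refine ⟨fun {c q} hcq => ?_⟩
    by_cases hc : c = 0
    · exact Or.inl hc
    · refine Or.inr ?_
      obtain ⟨y, rfl⟩ := Submodule.Quotient.mk_surjective M q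
      rw [← Submodule.Quotient.mk_smul, Submodule.Quotient.mk_eq_zero] at hcq
      obtain ⟨z, hz⟩ := hcq
      obtain ⟨w, hw⟩ := hsat c y hc ⟨z, hz⟩
      rw [Submodule.Quotient.mk_eq_zero]
      exact ⟨w, hw⟩
  -- a splitting of the quotient map
  obtain ⟨s, hs⟩ := Module.projective_lifting_property M.mkQ (LinearMap.id)
    (Submodule.mkQ_surjective M)
  -- the combined equivalence
  have hbij : Function.Bijective (F.coprod s) := by
    constructor
    · intro p q hpq
      have h1 : M.mkQ (F.coprod s p) = M.mkQ (F.coprod s q) := by rw [hpq]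
      simp only [LinearMap.coprod_apply, map_add] at h1
      have hFm : ∀ z : Fin k → ℤ, M.mkQ (F z) = 0 := fun z => by
        rw [Submodule.mkQ_apply, Submodule.Quotient.mk_eq_zero]; exact ⟨z, rfl⟩
      have hsq : ∀ q : Q, M.mkQ (s q) = q := fun q => by
        have := LinearMap.congr_fun hs q; simpa using this
      rw [hFm, hFm, hsq, hsq, zero_add, zero_add] at h1
      have h2 : F p.1 = F q.1 := by
        have := congrArg (fun z => z - s p.2) hpq
        simp only [LinearMap.coprod_apply] at this
        rw [h1] at this
        simpa using this
      have h3 : p.1 = q.1 := by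
        have : n *ᵥ (p.1 - q.1) = 0 := by
          have : F (p.1 - q.1) = 0 := by rw [map_sub, h2, sub_self]
          simpa [hF] using this
        have := hinj _ this
        exact sub_eq_zero.mp this
      exact Prod.ext h3 h1
    · intro y
      have hmem : y - s (M.mkQ y) ∈ M := by
        rw [← Submodule.Quotient.mk_eq_zero, ← Submodule.mkQ_apply, map_sub]
        have : M.mkQ (s (M.mkQ y)) = M.mkQ y := by
          have := LinearMap.congr_fun hs (M.mkQ y); simpa using this
        rw [this, sub_self]
      obtain ⟨z, hz⟩ := hmem
      exact ⟨(z, M.mkQ y), by simp [LinearMap.coprod_apply, hz]⟩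
  set E1 : ((Fin k → ℤ) × Q) ≃ₗ[ℤ] (Fin (k+r) → ℤ) := LinearEquiv.ofBijective (F.coprod s) hbij
    with hE1
  -- Q is free of rank r
  have hcard : Fintype.card (Module.Free.ChooseBasisIndex ℤ Q) = r := by
    have h1 : Module.finrank ℤ ((Fin k → ℤ) × Q) = Module.finrank ℤ (Fin (k+r) → ℤ) :=
      E1.finrank_eq
    rw [Module.finrank_prod, Module.finrank_fintype_fun_eq_card,
      Module.finrank_fintype_fun_eq_card, Fintype.card_fin, Fintype.card_fin] at h1
    rw [← Module.finrank_eq_card_chooseBasisIndex]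
    omega
  set E2 : Q ≃ₗ[ℤ] (Fin r → ℤ) :=
    ((Module.Free.chooseBasis ℤ Q).reindex (Fintype.equivFinOfCardEq hcard)).equivFun with hE2
  set g : (Fin (k+r) → ℤ) ≃ₗ[ℤ] ((Fin k → ℤ) × (Fin r → ℤ)) :=
    E1.symm.trans ((LinearEquiv.refl ℤ (Fin k → ℤ)).prodCongr E2) with hg
  have hgF : ∀ z : Fin k → ℤ, g (n *ᵥ z) = (z, 0) := by
    intro z
    have h1 : E1 (z, (0:Q)) = n *ᵥ z := by
      simp [hE1, LinearEquiv.ofBijective_apply, LinearMap.coprod_apply, hF]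
    have h2 : E1.symm (n *ᵥ z) = (z, 0) := by
      rw [← h1, LinearEquiv.symm_apply_apply]
    simp [hg, LinearEquiv.trans_apply, h2, LinearEquiv.prodCongr_apply, map_zero]
  have hgsymm_l : ∀ z : Fin k → ℤ, g.symm (z, 0) = n *ᵥ z := fun z => by
    rw [← hgF z, LinearEquiv.symm_apply_apply]
  -- matrices of g
  set C1 : Matrix (Fin k) (Fin (k+r)) ℤ := Matrix.of (fun i j => (g (Pi.single j 1)).1 i) with hC1
  set C2 : Matrix (Fin r) (Fin (k+r)) ℤ := Matrix.of (fun i j => (g (Pi.single j 1)).2 i) with hC2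
  set D : Matrix (Fin (k+r)) (Fin r) ℤ := Matrix.of (fun i j => (g.symm (0, Pi.single j 1)) i)
    with hD
  have hgmat : ∀ y : Fin (k+r) → ℤ, g y = (C1 *ᵥ y, C2 *ᵥ y) := by
    intro y
    have : ((Matrix.mulVecLin C1).prod (Matrix.mulVecLin C2)) = g.toLinearMap := by
      apply Module.Basis.ext (Pi.basisFun ℤ (Fin (k+r)))
      intro j
      rw [Pi.basisFun_apply]
      simp only [LinearMap.prod_apply, Pi.prod, Matrix.mulVecLin_apply, Matrix.mulVec_single,
        LinearEquiv.coe_coe, mul_one]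
      refine Prod.ext ?_ ?_ <;> funext i <;> simp [Function.prod, Matrix.mulVec_single, hC1, hC2]
    have := LinearMap.congr_fun this y
    simpa [LinearMap.prod_apply, Pi.prod] using this.symm
  have hDmat : ∀ w : Fin r → ℤ, g.symm (0, w) = D *ᵥ w := by
    intro w
    have : (Matrix.mulVecLin D) = g.symm.toLinearMap.comp (LinearMap.inr ℤ _ _) := by
      apply Module.Basis.ext (Pi.basisFun ℤ (Fin r))
      intro j
      rw [Pi.basisFun_apply]
      simp only [Matrix.mulVecLin_apply, Matrix.mulVec_single, mul_one, LinearMap.coe_comp,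
        LinearEquiv.coe_coe, Function.comp_apply, LinearMap.inr_apply]
      funext i
      simp [hD]
    have := LinearMap.congr_fun this w
    simpa using this.symm
  refine ⟨C1, C2, D, ?_, ?_, ?_⟩
  · apply matrix_eq_of_mulVec
    intro w
    rw [← Matrix.mulVec_mulVec]
    have h1 := hgF w
    rw [hgmat (n *ᵥ w)] at h1
    have := congrArg Prod.snd h1
    simpa using this
  · apply matrix_eq_of_mulVec
    intro w
    rw [← Matrix.mulVec_mulVec, Matrix.one_mulVec]
    have h1 : g (g.symm (0, w)) = (0, w) := g.apply_symm_apply _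
    rw [hDmat w] at h1
    rw [hgmat (D *ᵥ w)] at h1
    have := congrArg Prod.snd h1
    simpa using this
  · apply matrix_eq_of_mulVec
    intro y
    rw [Matrix.add_mulVec, ← Matrix.mulVec_mulVec, ← Matrix.mulVec_mulVec, Matrix.one_mulVec]
    have h1 : g.symm (g y) = y := g.symm_apply_apply y
    rw [hgmat y] at h1
    have h2 : g.symm (C1 *ᵥ y, C2 *ᵥ y) = g.symm (C1 *ᵥ y, 0) + g.symm (0, C2 *ᵥ y) := by
      rw [← map_add]; congr 1; simp
    rw [h2, hgsymm_l, hDmat] at h1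
    exact h1



open Matrix

lemma coe_sum {ι : Type*} (s : Finset ι) (f : ι → ℝ) :
    ((∑ j ∈ s, f j : ℝ) : AddCircle (1:ℝ)) = ∑ j ∈ s, ((f j : ℝ) : AddCircle (1:ℝ)) := by
  classical
  induction s using Finset.induction_on with
  | empty => simp
  | insert _ _ hj ih => rw [Finset.sum_insert hj, Finset.sum_insert hj, AddCircle.coe_add, ih]

lemma rep_vec {ι : Type*} (t : ι → AddCircle (1:ℝ)) :
    ∃ v : ι → ℝ, t = fun j => ((v j : ℝ) : AddCircle (1:ℝ)) := by
  have h : ∀ j, ∃ v : ℝ, ((v : ℝ) : AddCircle (1:ℝ)) = t j :=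
    fun j => QuotientAddGroup.mk_surjective (t j)
  choose v hv using h
  exact ⟨v, funext fun j => (hv j).symm⟩

lemma coe_int_zero (m : ℤ) : (((m : ℝ)) : AddCircle (1:ℝ)) = 0 := by
  rw [AddCircle.coe_eq_zero_iff]
  exact ⟨m, by simp⟩

lemma coe_eq_zero_int {x : ℝ} : ((x : ℝ) : AddCircle (1:ℝ)) = 0 ↔ ∃ m : ℤ, x = m := by
  rw [AddCircle.coe_eq_zero_iff]
  constructor
  · rintro ⟨m, hm⟩; exact ⟨m, by simpa using hm.symm⟩
  · rintro ⟨m, hm⟩; exact ⟨m, by simp [hm]⟩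

/-- If there is a continuous, open, surjective homomorphism
`φ : ℝ^k × K → 𝕋^(k+r)` with kernel exactly `ℤ^k × {0}`, where `K` is a compact Hausdorff
abelian topological group, then `K` is isomorphic as a topological group to `𝕋^r`. -/
theorem stmt7 {K : Type*} [AddCommGroup K] [TopologicalSpace K]
    [IsTopologicalAddGroup K] [CompactSpace K] [T2Space K]
    (k r : ℕ)
    (φ : ((Fin k → ℝ) × K) →+ (Fin (k + r) → AddCircle (1 : ℝ)))
    (hcont : Continuous φ) (hopen : IsOpenMap φ)
    (hsurj : Function.Surjective φ)
    (hker : ∀ x : (Fin k → ℝ) × K,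
      φ x = 0 ↔ ((∀ i, ∃ n : ℤ, x.1 i = (n : ℝ)) ∧ x.2 = 0)) :
    ∃ e : K ≃ₜ (Fin r → AddCircle (1 : ℝ)), ∀ x y, e (x + y) = e x + e y := by
  classical
  -- Step 1: characters along the `ℝ^k` factor are given by integers
  have hchar : ∀ (i : Fin (k+r)) (j : Fin k), ∃ m : ℤ, ∀ t : ℝ,
      φ (Pi.single j t, 0) i = (((m : ℝ) * t : ℝ) : AddCircle (1:ℝ)) := by
    intro i j
    have hadd : ∀ s t : ℝ, φ (Pi.single j (s + t), 0) i
        = φ (Pi.single j s, 0) i + φ (Pi.single j t, 0) i := by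
      intro s t
      have h1 : ((Pi.single j (s+t) : Fin k → ℝ), (0:K))
          = (Pi.single j s, (0:K)) + (Pi.single j t, (0:K)) := by
        refine Prod.ext ?_ (by simp)
        simp [Pi.single_add]
      rw [h1, map_add, Pi.add_apply]
    set χ : ℝ →+ AddCircle (1:ℝ) := AddMonoidHom.mk' (fun t => φ (Pi.single j t, 0) i) hadd
      with hχdef
    have hsingle_cont : Continuous (fun t : ℝ => (Pi.single j t : Fin k → ℝ)) := by
      apply continuous_pi
      intro i'
      by_cases h : i' = j
      · subst h; simpa [Pi.single_apply] using continuous_id'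
      · simp only [Pi.single_apply, if_neg h]
        exact continuous_const
    have hχc : Continuous χ := by
      show Continuous fun t : ℝ => φ (Pi.single j t, 0) i
      exact (continuous_apply i).comp (hcont.comp (hsingle_cont.prodMk continuous_const))
    obtain ⟨a, ha⟩ := char_real χ hχc
    have hone : φ (Pi.single j (1:ℝ), 0) = 0 := by
      apply (hker _).mpr
      refine ⟨?_, rfl⟩
      intro i'
      by_cases h : i' = j
      · subst h; exact ⟨1, by simp⟩
      · exact ⟨0, by simp [Pi.single_apply, h]⟩
    have hint : ((a : ℝ) : AddCircle (1:ℝ)) = 0 := by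
      have := ha 1
      rw [mul_one] at this
      have h2 : χ 1 = 0 := by
        show φ (Pi.single j (1:ℝ), 0) i = 0
        rw [hone]; rfl
      rw [h2] at this; exact this.symm
    obtain ⟨m, hm⟩ := coe_eq_zero_int.mp hint
    exact ⟨m, fun t => by rw [← hm]; exact ha t⟩
  choose n hn using hchar
  set nM : Matrix (Fin (k+r)) (Fin k) ℤ := Matrix.of n with hnM
  set nR : Matrix (Fin (k+r)) (Fin k) ℝ := nM.map ((↑) : ℤ → ℝ) with hnR
  -- Step 2: formula for φ on the `ℝ^k` factor
  have key1 : ∀ (x : Fin k → ℝ) (i : Fin (k+r)), φ (x, 0) i = (((nR *ᵥ x) i : ℝ) : AddCircle (1:ℝ)) := by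
    intro x i
    have hx : ((x : Fin k → ℝ), (0:K)) = ∑ j, ((Pi.single j (x j) : Fin k → ℝ), (0:K)) := by
      refine Prod.ext ?_ (by simp [Prod.snd_sum])
      simp only [Prod.fst_sum]
      funext i'
      rw [Finset.sum_apply]
      simp [Finset.sum_pi_single']
    rw [hx, map_sum, Finset.sum_apply]
    have : ∀ j, φ ((Pi.single j (x j) : Fin k → ℝ), (0:K)) i = (((n i j : ℝ) * x j : ℝ) : AddCircle (1:ℝ)) :=
      fun j => hn i j (x j)
    rw [Finset.sum_congr rfl (fun j _ => this j), ← coe_sum]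
    congr 1
  have hφn : ∀ x : Fin k → ℝ, φ (x, 0) = fun i => (((nR *ᵥ x) i : ℝ) : AddCircle (1:ℝ)) :=
    fun x => funext (key1 x)
  -- Step 3: kernel characterization in terms of nR
  have keyP : ∀ x : Fin k → ℝ,
      (∀ i, ∃ m : ℤ, (nR *ᵥ x) i = m) ↔ (∀ j, ∃ m : ℤ, x j = m) := by
    intro x
    constructor
    · intro h
      have hz : φ (x, 0) = 0 := by
        funext i
        rw [key1]
        obtain ⟨m, hm⟩ := h i
        rw [hm]
        exact coe_int_zero m
      exact ((hker (x, 0)).mp hz).1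
    · intro h
      have hz : φ (x, 0) = 0 := (hker (x, 0)).mpr ⟨h, rfl⟩
      intro i
      have := congrFun hz i
      rw [key1] at this
      exact coe_eq_zero_int.mp this
  -- Step 4: injectivity and saturation over ℤ
  have hreal_inj : ∀ x : Fin k → ℝ, nR *ᵥ x = 0 → x = 0 := by
    intro x hx
    funext j
    by_contra hj
    have hall : ∀ t : ℝ, ∃ m : ℤ, t * x j = m := by
      intro t
      have h1 : ∀ i, ∃ m : ℤ, (nR *ᵥ (t • x)) i = m := by
        intro i
        refine ⟨0, ?_⟩
        rw [Matrix.mulVec_smul, hx]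
        simp
      obtain ⟨m, hm⟩ := (keyP (t • x)).mp h1 j
      exact ⟨m, by simpa [smul_eq_mul] using hm⟩
    obtain ⟨m, hm⟩ := hall (1 / (2 * x j))
    have hj' : x j ≠ 0 := by simpa using hj
    have hxj : (1 / (2 * x j)) * x j = 1/2 := by field_simp
    rw [hxj] at hm
    have : (2 * m : ℤ) = 1 := by
      have : (2:ℝ) * m = 1 := by rw [← hm]; ring
      exact_mod_cast this
    omega
  have hinjZ : ∀ z : Fin k → ℤ, nM *ᵥ z = 0 → z = 0 := by
    intro z hz
    have hcast : nR *ᵥ (fun j => (z j : ℝ)) = 0 := by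
      funext i
      have := congrFun hz i
      simp only [Matrix.mulVec, dotProduct, hnR, hnM, Matrix.map_apply, Matrix.of_apply,
        Pi.zero_apply] at this ⊢
      exact_mod_cast this
    have hz0 := hreal_inj _ hcast
    funext j
    have h2 : ((z j : ℤ) : ℝ) = 0 := by simpa using congrFun hz0 j
    exact_mod_cast h2
  have hsatZ : ∀ (c : ℤ) (y : Fin (k+r) → ℤ), c ≠ 0 →
      (∃ z, nM *ᵥ z = c • y) → ∃ w, nM *ᵥ w = y := by
    rintro c y hc ⟨z, hz⟩
    have hcR : ((c : ℝ)) ≠ 0 := Int.cast_ne_zero.mpr hc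
    set x : Fin k → ℝ := fun j => (z j : ℝ) / c with hxdef
    have hint : ∀ j, ∃ m : ℤ, x j = m := by
      apply (keyP x).mp
      intro i
      refine ⟨y i, ?_⟩
      have hzi : ((∑ j, nM i j * z j : ℤ) : ℝ) = (c : ℝ) * (y i : ℝ) := by
        have := congrFun hz i
        simp only [Matrix.mulVec, dotProduct, Pi.smul_apply, smul_eq_mul] at this
        exact_mod_cast this
      have : (nR *ᵥ x) i = ((∑ j, nM i j * z j : ℤ) : ℝ) / c := by
        simp only [Matrix.mulVec, dotProduct, hnR, Matrix.map_apply, hxdef]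
        push_cast
        rw [Finset.sum_div]
        congr 1
        funext j
        ring
      rw [this, hzi, mul_div_cancel_left₀ _ hcR]
    choose w hw using hint
    refine ⟨w, ?_⟩
    have hzw : ∀ j, z j = c * w j := by
      intro j
      have := hw j
      rw [hxdef] at this
      have h2 : (z j : ℝ) = (c : ℝ) * (w j : ℝ) := by
        field_simp at this
        linarith [this]
      exact_mod_cast h2
    have : nM *ᵥ z = c • (nM *ᵥ w) := by
      have : z = c • w := funext fun j => by rw [hzw j]; rfl
      rw [this, Matrix.mulVec_smul]
    rw [this] at hz
    funext i
    have := congrFun hz i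
    simp only [Pi.smul_apply, smul_eq_mul] at this
    exact mul_left_cancel₀ hc this
  -- Step 5: complement matrices
  obtain ⟨C1, C2, D, hI1, hI2, hI3⟩ := exists_complement k r nM hinjZ hsatZ
  set C1R : Matrix (Fin k) (Fin (k+r)) ℝ := C1.map ((↑) : ℤ → ℝ) with hC1R
  set C2R : Matrix (Fin r) (Fin (k+r)) ℝ := C2.map ((↑) : ℤ → ℝ) with hC2R
  set DR : Matrix (Fin (k+r)) (Fin r) ℝ := D.map ((↑) : ℤ → ℝ) with hDR
  have castmul : ∀ {a b c : ℕ} (A : Matrix (Fin a) (Fin b) ℤ) (B : Matrix (Fin b) (Fin c) ℤ),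
      (A * B).map ((↑) : ℤ → ℝ) = A.map ((↑) : ℤ → ℝ) * B.map ((↑) : ℤ → ℝ) := by
    intro a b c A B
    ext i j
    simp only [Matrix.map_apply, Matrix.mul_apply]
    push_cast
    rfl
  have rI1 : C2R * nR = 0 := by
    rw [hC2R, hnR, ← castmul, hI1]
    ext i j; simp
  have rI2 : C2R * DR = 1 := by
    rw [hC2R, hDR, ← castmul, hI2]
    ext i j
    simp [Matrix.one_apply, apply_ite]
  have rI3 : nR * C1R + DR * C2R = 1 := by
    rw [hnR, hC1R, hDR, hC2R, ← castmul, ← castmul]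
    ext i j
    have h := congrFun (congrFun hI3 i) j
    simp only [Matrix.add_apply, Matrix.one_apply, Matrix.map_apply] at h ⊢
    by_cases hij : i = j
    · simp only [if_pos hij] at h ⊢; exact_mod_cast h
    · simp only [if_neg hij] at h ⊢; exact_mod_cast h
  -- Step 6: the induced map on the torus
  set T2 : (Fin (k+r) → AddCircle (1:ℝ)) → (Fin r → AddCircle (1:ℝ)) :=
    fun t i => ∑ j, C2 i j • t j with hT2
  have hT2add : ∀ u v, T2 (u + v) = T2 u + T2 v := by
    intro u v
    funext i
    simp [hT2, smul_add, Finset.sum_add_distrib]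
  set T2hom : (Fin (k+r) → AddCircle (1:ℝ)) →+ (Fin r → AddCircle (1:ℝ)) :=
    AddMonoidHom.mk' T2 hT2add with hT2hom
  have hT2coe : ∀ v : Fin (k+r) → ℝ,
      T2 (fun j => ((v j : ℝ) : AddCircle (1:ℝ))) = fun i => (((C2R *ᵥ v) i : ℝ) : AddCircle (1:ℝ)) := by
    intro v
    funext i
    rw [hT2]
    simp only
    have : ∀ j, C2 i j • ((v j : ℝ) : AddCircle (1:ℝ)) = (((C2R i j * v j : ℝ)) : AddCircle (1:ℝ)) := by
      intro j
      rw [← AddCircle.coe_zsmul]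
      congr 1
      rw [zsmul_eq_mul]
      simp [hC2R]
    rw [Finset.sum_congr rfl (fun j _ => this j), ← coe_sum]
    congr 1
  have hT2cont : Continuous T2 := by
    apply continuous_pi
    intro i
    apply continuous_finset_sum
    intro j _
    exact (continuous_zsmul (C2 i j)).comp (continuous_apply j)
  -- integral vectors map to zero
  have hintzero : ∀ ω : Fin r → ℤ, ∀ i,
      (((DR *ᵥ (fun l => (ω l : ℝ))) i : ℝ) : AddCircle (1:ℝ)) = 0 := by
    intro ω i
    have : (DR *ᵥ (fun l => (ω l : ℝ))) i = ((∑ l, D i l * ω l : ℤ) : ℝ) := by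
      simp only [Matrix.mulVec, dotProduct, hDR, Matrix.map_apply]
      push_cast
      rfl
    rw [this]
    exact coe_int_zero _
  -- Step 7: bijectivity of the final map
  have hker0 : ∀ m : K, T2 (φ (0, m)) = 0 → m = 0 := by
    intro m h0
    obtain ⟨v, hv⟩ := rep_vec (φ (0, m))
    rw [hv, hT2coe v] at h0
    have hω : ∀ i, ∃ ω : ℤ, (C2R *ᵥ v) i = ω := by
      intro i
      have := congrFun h0 i
      exact coe_eq_zero_int.mp this
    choose ω hωe using hω
    have hx : φ (C1R *ᵥ v, 0) = φ (0, m) := by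
      rw [hφn, hv]
      funext i
      have h1 : nR *ᵥ (C1R *ᵥ v) = v - DR *ᵥ (C2R *ᵥ v) := by
        rw [Matrix.mulVec_mulVec]
        have h2 : nR * C1R = 1 - DR * C2R := eq_sub_of_add_eq rI3
        rw [h2, Matrix.sub_mulVec, Matrix.one_mulVec, Matrix.mulVec_mulVec]
      rw [h1]
      have h3 : C2R *ᵥ v = fun l => ((ω l : ℝ)) := funext fun l => hωe l
      rw [h3]
      have h4 : (v - DR *ᵥ fun l => ((ω l : ℝ))) i = v i - (DR *ᵥ fun l => ((ω l : ℝ))) i := rfl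
      rw [h4, AddCircle.coe_sub, hintzero ω i, sub_zero]
    have h5 : φ (C1R *ᵥ v, -m) = 0 := by
      have h6 : ((C1R *ᵥ v : Fin k → ℝ), -m) = (C1R *ᵥ v, (0:K)) - (0, m) := by
        refine Prod.ext (by simp) (by simp)
      rw [h6, map_sub, hx, sub_self]
    have := ((hker _).mp h5).2
    simpa using this
  have hinjE : Function.Injective (fun m : K => T2 (φ (0, m))) := by
    intro m1 m2 h
    have h' : T2 (φ (0, m1)) = T2 (φ (0, m2)) := h
    have h0 : T2 (φ (0, m1 - m2)) = 0 := by
      have h1 : ((0 : Fin k → ℝ), m1 - m2) = (0, m1) - (0, m2) := by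
        refine Prod.ext (by simp) (by simp)
      rw [h1, map_sub]
      show T2hom (φ (0, m1) - φ (0, m2)) = 0
      rw [map_sub]
      show T2 (φ (0, m1)) - T2 (φ (0, m2)) = 0
      rw [h', sub_self]
    exact sub_eq_zero.mp (hker0 _ h0)
  have hsurjE : Function.Surjective (fun m : K => T2 (φ (0, m))) := by
    intro y
    obtain ⟨v, hv⟩ := rep_vec y
    obtain ⟨⟨x, m⟩, hxm⟩ := hsurj (fun i => (((DR *ᵥ v) i : ℝ) : AddCircle (1:ℝ)))
    refine ⟨m, ?_⟩
    have hsplit : ((0 : Fin k → ℝ), m) = (x, m) - (x, (0:K)) := by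
      refine Prod.ext (by simp) (by simp)
    show T2 (φ (0, m)) = y
    rw [hsplit, map_sub]
    have hms : T2 (φ (x, m) - φ (x, 0)) = T2 (φ (x, m)) - T2 (φ (x, 0)) :=
      map_sub T2hom _ _
    rw [hms]
    have h1 : T2 (φ (x, m)) = y := by
      rw [hxm, hT2coe (DR *ᵥ v)]
      rw [hv]
      funext i
      rw [Matrix.mulVec_mulVec, rI2, Matrix.one_mulVec]
    have h2 : T2 (φ (x, 0)) = 0 := by
      rw [hφn x, hT2coe (nR *ᵥ x)]
      funext i
      rw [Matrix.mulVec_mulVec, rI1, Matrix.zero_mulVec]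
      exact coe_eq_zero_int.mpr ⟨0, by simp⟩
    rw [h1, h2, sub_zero]
  -- Step 8: assemble the homeomorphism
  set E : K ≃ (Fin r → AddCircle (1:ℝ)) :=
    Equiv.ofBijective _ ⟨hinjE, hsurjE⟩ with hE
  have hEcont : Continuous (E : K → (Fin r → AddCircle (1:ℝ))) := by
    show Continuous fun m : K => T2 (φ (0, m))
    exact hT2cont.comp (hcont.comp (continuous_const.prodMk continuous_id))
  refine ⟨Continuous.homeoOfEquivCompactToT2 (f := E) hEcont, ?_⟩
  intro a b
  show T2 (φ (0, a + b)) = T2 (φ (0, a)) + T2 (φ (0, b))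
  have h1 : ((0 : Fin k → ℝ), a + b) = (0, a) + (0, b) := by
    refine Prod.ext (by simp) (by simp)
  rw [h1, map_add]
  exact hT2add _ _

end
end

section
/- Let $K$ be a compact abelian topological group, $k \geq 0$, and let $V$ be an open subset of the product topological group $\mathbb{R}^k \times K$ containing the subgroup $\{0\} \times K$. Then there exists a natural number $m \geq 1$ such that the $m$-fold sumset $V + V + \dots + V$ ($m$ times) together with the lattice satisfies $(\underbrace{V + \dots + V}_{m}) + (\mathbb{Z}^k \times \{0\}) = \mathbb{R}^k \times K$. -/
/-- If `V` is an open subset of `ℝ^k × K` (with `K` a compact abelian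
topological group) containing `{0} × K`, then there is `m ≥ 1` such that the `m`-fold
sumset of `V` plus the lattice `ℤ^k × {0}` is all of `ℝ^k × K`. -/
theorem stmt8 {K : Type*} [AddCommGroup K] [TopologicalSpace K]
    [IsTopologicalAddGroup K] [CompactSpace K]
    (k : ℕ) (V : Set ((Fin k → ℝ) × K)) (hV : IsOpen V)
    (hKV : ∀ x : K, ((0 : Fin k → ℝ), x) ∈ V) :
    ∃ m : ℕ, 1 ≤ m ∧ ∀ z : (Fin k → ℝ) × K,
      ∃ (f : Fin m → (Fin k → ℝ) × K) (l : (Fin k → ℝ) × K),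
        (∀ j, f j ∈ V) ∧ (∀ i, ∃ n : ℤ, l.1 i = (n : ℝ)) ∧ l.2 = 0 ∧
        z = (∑ j, f j) + l := by
  -- tube lemma: get open u ∋ 0 with u ×ˢ univ ⊆ V
  obtain ⟨u, w, hu, hw, h0u, hKw, huw⟩ :=
    generalized_tube_lemma isCompact_singleton (isCompact_univ (X := K)) hV
      (by rintro ⟨a, b⟩ ⟨ha, -⟩; simp only [Set.mem_singleton_iff] at ha; subst ha
          exact hKV b)
  have h0 : (0 : Fin k → ℝ) ∈ u := h0u rfl
  obtain ⟨ε, hε, hball⟩ := Metric.isOpen_iff.mp hu 0 h0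
  set m : ℕ := ⌈1 / ε⌉₊ + 1 with hm
  have hm1 : 1 ≤ m := Nat.le_add_left 1 _
  have hmpos : (0 : ℝ) < m := by positivity
  have hinv : 1 / (m : ℝ) < ε := by
    rw [div_lt_iff₀ hmpos, ← div_lt_iff₀' hε]
    calc 1 / ε ≤ (⌈1 / ε⌉₊ : ℝ) := Nat.le_ceil _
      _ < m := by rw [hm]; push_cast; linarith
  refine ⟨m, hm1, fun z => ?_⟩
  set x' : Fin k → ℝ := fun i => Int.fract (z.1 i) with hx'
  have hx'norm : ‖(m : ℝ)⁻¹ • x'‖ < ε := by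
    refine lt_of_le_of_lt (norm_smul_le _ _) ?_
    have h1 : ‖x'‖ ≤ 1 := by
      refine (pi_norm_le_iff_of_nonneg zero_le_one).mpr fun i => ?_
      rw [Real.norm_eq_abs, abs_of_nonneg (Int.fract_nonneg _)]
      exact (Int.fract_lt_one _).le
    have : ‖(m : ℝ)⁻¹‖ = 1 / m := by
      rw [Real.norm_eq_abs, abs_of_pos (by positivity), one_div]
    rw [this]
    calc 1 / (m : ℝ) * ‖x'‖ ≤ 1 / m * 1 := by
          apply mul_le_mul_of_nonneg_left h1; positivity
      _ = 1 / m := mul_one _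
      _ < ε := hinv
  have hmem : ∀ c : K, ((m : ℝ)⁻¹ • x', c) ∈ V := fun c =>
    huw ⟨hball (by simpa [Metric.mem_ball, dist_zero_right] using hx'norm), hKw trivial⟩
  refine ⟨fun j => ((m : ℝ)⁻¹ • x', if j = ⟨0, hm1⟩ then z.2 else 0),
    (fun i => (⌊z.1 i⌋ : ℝ), 0), fun j => hmem _, fun i => ⟨⌊z.1 i⌋, rfl⟩, rfl, ?_⟩
  have hsum : (∑ j : Fin m, ((m : ℝ)⁻¹ • x', if j = ⟨0, hm1⟩ then z.2 else 0))
      = (x', z.2) := by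
    rw [Prod.ext_iff]
    constructor
    · simp only [Prod.fst_sum, Finset.sum_const, Finset.card_univ, Fintype.card_fin]
      rw [← Nat.cast_smul_eq_nsmul ℝ, smul_smul, mul_inv_cancel₀ (by positivity), one_smul]
    · simp only [Prod.snd_sum]
      rw [Finset.sum_ite_eq' Finset.univ]
      simp
  rw [hsum]
  refine Prod.ext ?_ (by simp)
  funext i
  show z.1 i = x' i + (⌊z.1 i⌋ : ℝ)
  rw [hx']
  exact (Int.fract_add_floor (z.1 i)).symm
end
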